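/- arXiv:1710.10572 — 3 statements merged into one kernel-verified Lean document; each statement's English description precedes it below -/
import Mathlib

section
/- In ℤ[y,y⁻¹,z,z⁻¹][[q]], one has ∏_{ε₁,ε₂ ∈ {+1,−1}} (1 − q y^{ε₁} z^{ε₂}) · ∑_{σ=0}^{∞} ∑_{n=0}^{∞} q^{σ+2n} χ_σ(y) χ_σ(z) = 1. (Character expansion of the universal AdS₅ function P₄ into so(4) ≅ su(2)⊕su(2) characters of the totally symmetric representations (σ,0).) -/
open LaurentPolynomial Finset

/-- The two-variable Laurent polynomial ring ℤ[y,y⁻¹,z,z⁻¹], realised as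
Laurent polynomials in `z` over Laurent polynomials in `y`. -/
noncomputable abbrev L2 : Type := LaurentPolynomial (LaurentPolynomial ℤ)

/-- The su(2) character `χ_n(y) = ∑_{k=0}^n y^{n-2k}`, in the variable `y`. -/
noncomputable def chiY (n : ℕ) : L2 :=
  LaurentPolynomial.C (∑ k ∈ Finset.range (n + 1), LaurentPolynomial.T ((n : ℤ) - 2 * k))

/-- The su(2) character `χ_n(z) = ∑_{k=0}^n z^{n-2k}`, in the variable `z`. -/
noncomputable def chiZv (n : ℕ) : L2 :=
  ∑ k ∈ Finset.range (n + 1), LaurentPolynomial.T ((n : ℤ) - 2 * k)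

/-- `y^{ε₁} z^{ε₂}` as an element of ℤ[y,y⁻¹,z,z⁻¹]. -/
noncomputable def yz (e₁ e₂ : ℤ) : L2 :=
  LaurentPolynomial.C (LaurentPolynomial.T e₁) * LaurentPolynomial.T e₂

/-- `∏_{ε₁,ε₂∈{±1}} (1 - q y^{ε₁} z^{ε₂})`, the inverse of the universal AdS₅
function `P₄(q,y,z)`, in ℤ[y,y⁻¹,z,z⁻¹][[q]]. -/
noncomputable def P4inv : PowerSeries L2 :=
  (1 - PowerSeries.C (yz 1 1) * PowerSeries.X) *
  (1 - PowerSeries.C (yz 1 (-1)) * PowerSeries.X) *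
  (1 - PowerSeries.C (yz (-1) 1) * PowerSeries.X) *
  (1 - PowerSeries.C (yz (-1) (-1)) * PowerSeries.X)

/- ### Auxiliary material -/

private lemma quartic {S : Type*} [CommRing S] (a a' b b' X : S)
    (ha : a * a' = 1) (hb : b * b' = 1) :
    (1 - a*b*X) * (1 - a*b'*X) * (1 - a'*b*X) * (1 - a'*b'*X)
      = 1 - (a+a')*(b+b')*X + ((a+a')^2+(b+b')^2-2)*X^2 - (a+a')*(b+b')*X^3 + X^4 := by
  linear_combination (X^2*(b^2+b'^2+2*b*b'-2) - X^3*(b*b')*(a+a')*(b+b')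
      + X^4*(b*b')*(a*a'*b*b'+1)) * ha
    + (X^2*(a^2+a'^2) - X^3*(a+a')*(b+b') + X^4*(a*a'*b*b'+1)) * hb

private lemma chi_rec' {R : Type*} [CommRing R] (n : ℕ) :
    (∑ k ∈ range (n+3), (T ((n:ℤ)+2 - 2*k) : R[T;T⁻¹]))
      = (T 1 + T (-1)) * (∑ k ∈ range (n+2), T ((n:ℤ)+1 - 2*k))
        - ∑ k ∈ range (n+1), T ((n:ℤ) - 2*k) := by
  have h1 : (T 1 : R[T;T⁻¹]) * (∑ k ∈ range (n+2), T ((n:ℤ)+1 - 2*k))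
      = ∑ k ∈ range (n+2), T ((n:ℤ)+2 - 2*k) := by
    rw [Finset.mul_sum]
    refine Finset.sum_congr rfl fun k _ => ?_
    rw [← T_add]; ring_nf
  have h2 : (T (-1) : R[T;T⁻¹]) * (∑ k ∈ range (n+2), T ((n:ℤ)+1 - 2*k))
      = ∑ k ∈ range (n+2), T ((n:ℤ) - 2*k) := by
    rw [Finset.mul_sum]
    refine Finset.sum_congr rfl fun k _ => ?_
    rw [← T_add]; ring_nf
  rw [add_mul, h1, h2, Finset.sum_range_succ (fun k => (T ((n:ℤ)+2 - 2*k) : R[T;T⁻¹])),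
    Finset.sum_range_succ (fun k => (T ((n:ℤ) - 2*k) : R[T;T⁻¹]))]
  have e1 : (n:ℤ)+2 - 2*(n+2) = (n:ℤ) - 2*(n+1) := by ring
  push_cast
  rw [e1]
  ring

/-- `y + y⁻¹` in `L2`. -/
noncomputable def pY : L2 := LaurentPolynomial.C (T 1 + T (-1))

/-- `z + z⁻¹` in `L2`. -/
noncomputable def rZ : L2 := T 1 + T (-1)

private lemma chiY_zero : chiY 0 = 1 := by
  simp [chiY]

private lemma chiZv_zero : chiZv 0 = 1 := by
  simp [chiZv]

private lemma chiY_one : chiY 1 = pY := by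
  simp [chiY, pY, Finset.sum_range_succ]

private lemma chiZv_one : chiZv 1 = rZ := by
  simp [chiZv, rZ, Finset.sum_range_succ]

private lemma chiY_rec (n : ℕ) : chiY (n+2) = pY * chiY (n+1) - chiY n := by
  simp only [chiY, pY]
  rw [← map_mul, ← map_sub]
  congr 1
  push_cast
  exact chi_rec' n

private lemma chiZv_rec (n : ℕ) : chiZv (n+2) = rZ * chiZv (n+1) - chiZv n := by
  simp only [chiZv, rZ]
  push_cast
  exact chi_rec' n

/-- `(y+y⁻¹)(z+z⁻¹)` -/
noncomputable def sOne : L2 := pY * rZ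

/-- `(y+y⁻¹)² + (z+z⁻¹)² - 2` -/
noncomputable def sTwo : L2 := pY^2 + rZ^2 - 2

private lemma P4inv_eq :
    P4inv = 1 - PowerSeries.C sOne * PowerSeries.X
      + PowerSeries.C sTwo * PowerSeries.X^2
      - PowerSeries.C sOne * PowerSeries.X^3 + PowerSeries.X^4 := by
  have ha : (LaurentPolynomial.C (T 1) : L2) * LaurentPolynomial.C (T (-1)) = 1 := by
    rw [← map_mul, ← T_add]; norm_num
  have hb : (T 1 : L2) * T (-1) = 1 := by rw [← T_add]; norm_num
  have key := quartic (PowerSeries.C (R := L2) (LaurentPolynomial.C (T 1)))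
    (PowerSeries.C (LaurentPolynomial.C (T (-1))))
    (PowerSeries.C (T 1)) (PowerSeries.C (T (-1))) PowerSeries.X
    (by rw [← map_mul, ha, map_one]) (by rw [← map_mul, hb, map_one])
  simp only [P4inv, yz, sOne, sTwo, pY, rZ, map_mul, map_add, map_sub, map_pow,
    map_one, map_ofNat] at key ⊢
  linear_combination key

private lemma key_prod :
    P4inv * PowerSeries.mk (fun n => chiY n * chiZv n) = 1 - PowerSeries.X^2 := by
  rw [P4inv_eq]
  have expand :
      (1 - PowerSeries.C sOne * PowerSeries.X
        + PowerSeries.C sTwo * PowerSeries.X^2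
        - PowerSeries.C sOne * PowerSeries.X^3 + PowerSeries.X^4)
        * PowerSeries.mk (fun n => chiY n * chiZv n)
      = PowerSeries.mk (fun n => chiY n * chiZv n)
        - PowerSeries.C sOne * (PowerSeries.mk (fun n => chiY n * chiZv n) * PowerSeries.X^1)
        + PowerSeries.C sTwo * (PowerSeries.mk (fun n => chiY n * chiZv n) * PowerSeries.X^2)
        - PowerSeries.C sOne * (PowerSeries.mk (fun n => chiY n * chiZv n) * PowerSeries.X^3)
        + PowerSeries.mk (fun n => chiY n * chiZv n) * PowerSeries.X^4 := by ring
  rw [expand]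
  refine PowerSeries.ext fun n => ?_
  simp only [map_add, map_sub, PowerSeries.coeff_C_mul, PowerSeries.coeff_mul_X_pow',
    PowerSeries.coeff_mk, PowerSeries.coeff_one, PowerSeries.coeff_X_pow]
  rcases n with _|_|_|_|n
  · norm_num [chiY_zero, chiZv_zero]
  · norm_num [chiY_one, chiZv_one, chiY_zero, chiZv_zero, sOne]
  · norm_num [chiY_one, chiZv_one, chiY_zero, chiZv_zero, chiY_rec 0, chiZv_rec 0,
      sOne, sTwo]
    ring
  · norm_num [chiY_one, chiZv_one, chiY_zero, chiZv_zero, chiY_rec 0, chiZv_rec 0,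
      chiY_rec 1, chiZv_rec 1, sOne, sTwo]
    ring
  · have c1 : 1 ≤ n+4 := by omega
    have c2 : 2 ≤ n+4 := by omega
    have c3 : 3 ≤ n+4 := by omega
    have c4 : 4 ≤ n+4 := by omega
    rw [if_pos c1, if_pos c2, if_pos c3, if_pos c4]
    have e1 : n+4-1 = n+3 := by omega
    have e2 : n+4-2 = n+2 := by omega
    have e3 : n+4-3 = n+1 := by omega
    have e4 : n+4-4 = n := by omega
    rw [e1, e2, e3, e4]
    have h4 : chiY (n+4) = pY * chiY (n+3) - chiY (n+2) := chiY_rec (n+2)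
    have h3 : chiY (n+3) = pY * chiY (n+2) - chiY (n+1) := chiY_rec (n+1)
    have h2 : chiY (n+2) = pY * chiY (n+1) - chiY n := chiY_rec n
    have g4 : chiZv (n+4) = rZ * chiZv (n+3) - chiZv (n+2) := chiZv_rec (n+2)
    have g3 : chiZv (n+3) = rZ * chiZv (n+2) - chiZv (n+1) := chiZv_rec (n+1)
    have g2 : chiZv (n+2) = rZ * chiZv (n+1) - chiZv n := chiZv_rec n
    rw [h4, g4, h3, g3, h2, g2]
    simp only [sOne, sTwo]
    have : ¬ (n + 4 = 0) := by omega
    rw [if_neg this]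
    have : ¬ (n + 4 = 2) := by omega
    rw [if_neg this]
    ring

/-- Character expansion of the universal AdS₅ function `P₄` into so(4) characters of the
totally symmetric irreps `(σ,0)`:
`∏_{ε₁,ε₂}(1 - q y^{ε₁}z^{ε₂}) · ∑_{σ,n≥0} q^{σ+2n} χ_σ(y)χ_σ(z) = 1`. -/
theorem P4_expansion :
    P4inv * PowerSeries.mk (fun m =>
      ∑ σ ∈ Finset.range (m + 1), if (m - σ) % 2 = 0 then chiY σ * chiZv σ else 0) = 1 := by
  set F := PowerSeries.mk (fun m =>
    ∑ σ ∈ Finset.range (m + 1), if (m - σ) % 2 = 0 then chiY σ * chiZv σ else 0) with hFdef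
  have hF : (1 - PowerSeries.X^2) * F = PowerSeries.mk (fun n => chiY n * chiZv n) := by
    have expand : (1 - PowerSeries.X^2) * F = F - F * PowerSeries.X^2 := by ring
    rw [expand]
    refine PowerSeries.ext fun n => ?_
    simp only [hFdef, map_sub, PowerSeries.coeff_mul_X_pow', PowerSeries.coeff_mk]
    rcases n with _|_|n
    · norm_num
    · norm_num [Finset.sum_range_succ]
    · have c2 : 2 ≤ n+2 := by omega
      rw [if_pos c2]
      have e : n + 2 - 2 = n := by omega
      rw [e]
      rw [Finset.sum_range_succ, Finset.sum_range_succ]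
      have hcongr : ∑ σ ∈ range (n+1), (if (n+2-σ)%2 = 0 then chiY σ * chiZv σ else 0)
          = ∑ σ ∈ range (n+1), (if (n-σ)%2 = 0 then chiY σ * chiZv σ else 0) := by
        refine Finset.sum_congr rfl fun σ hσ => ?_
        rw [Finset.mem_range] at hσ
        have : (n+2-σ)%2 = (n-σ)%2 := by omega
        rw [this]
      rw [hcongr]
      have t1 : (n+2-(n+1)) % 2 = 1 := by omega
      have t2 : (n+2-(n+2)) % 2 = 0 := by omega
      rw [t1, t2]
      norm_num
  have hu : IsUnit (1 - PowerSeries.X^2 : PowerSeries L2) := by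
    rw [PowerSeries.isUnit_iff_constantCoeff]
    simp
  refine hu.mul_left_cancel ?_
  calc (1 - PowerSeries.X^2) * (P4inv * F)
      = P4inv * ((1 - PowerSeries.X^2) * F) := by ring
    _ = P4inv * PowerSeries.mk (fun n => chiY n * chiZv n) := by rw [hF]
    _ = (1 - PowerSeries.X^2) * 1 := by rw [key_prod, mul_one]
end

section
/- For all natural numbers s, τ with 1 ≤ τ ≤ s, in ℤ[x,x⁻¹][[q]] one has (1 − qx)(1 − qx⁻¹) · ∑_{k=0}^{τ−1} ∑_{σ=0}^{∞} q^{σ+k} χ_{s+σ−k}(x) = χ_s(x) − q^τ χ_{s−τ}(x). (This encodes the so(2)⊕so(3) decomposition of the so(2,3) module of a depth-τ partially massless spin-s field: D(s+2−τ;(s)) ≅ ⊕_{σ,n≥0} ⊕_{k=0}^{τ−1} D(s+2−τ+n+σ+k;(s+σ−k)).) -/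
/-- The so(3) character `χ_n(x) = ∑_{k=0}^n x^{n-2k}` in ℤ[x,x⁻¹]. -/
noncomputable def chi (n : ℕ) : LaurentPolynomial ℤ :=
  ∑ k ∈ Finset.range (n + 1), LaurentPolynomial.T ((n : ℤ) - 2 * k)

open LaurentPolynomial PowerSeries in
/-- The so(3) character recursion: `χ₁ · χ_{n+1} = χ_{n+2} + χ_n`. -/
lemma chi_rec (n : ℕ) :
    (T 1 + T (-1) : LaurentPolynomial ℤ) * chi (n + 1) = chi (n + 2) + chi n := by
  unfold chi
  rw [add_mul, Finset.mul_sum, Finset.mul_sum]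
  have h1 : ∑ i ∈ Finset.range (n + 1 + 1), (T 1 * T ((↑(n+1) : ℤ) - 2 * i) : LaurentPolynomial ℤ)
      = ∑ i ∈ Finset.range (n + 2 + 1), (T ((↑(n+2) : ℤ) - 2 * i) : LaurentPolynomial ℤ)
        - T (-(n : ℤ) - 2) := by
    rw [show n + 2 + 1 = (n + 1 + 1) + 1 from rfl]
    conv_rhs => rw [Finset.sum_range_succ]
    have h0 : ((↑(n+2) : ℤ) - 2 * (↑(n + 1 + 1) : ℕ)) = -(n:ℤ) - 2 := by push_cast; ring
    rw [h0, add_sub_cancel_right]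
    apply Finset.sum_congr rfl; intro k _
    rw [← T_add]; congr 1; push_cast; ring
  have h2 : ∑ i ∈ Finset.range (n + 1 + 1), (T (-1) * T ((↑(n+1) : ℤ) - 2 * i) : LaurentPolynomial ℤ)
      = ∑ i ∈ Finset.range (n + 1), (T ((n : ℤ) - 2 * i) : LaurentPolynomial ℤ)
        + T (-(n : ℤ) - 2) := by
    rw [Finset.sum_range_succ]
    congr 1
    · apply Finset.sum_congr rfl; intro k _
      rw [← T_add]; congr 1; push_cast; ring
    · rw [← T_add]; congr 1; push_cast; ring
  rw [h1, h2]; ring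

open LaurentPolynomial PowerSeries in
lemma pm_prod_eq :
    (1 - PowerSeries.C (R := LaurentPolynomial ℤ) (T 1) * X) *
      (1 - PowerSeries.C (R := LaurentPolynomial ℤ) (T (-1)) * X) =
    1 - PowerSeries.C (R := LaurentPolynomial ℤ) (T 1 + T (-1)) * X + X ^ 2 := by
  have h : (PowerSeries.C (R := LaurentPolynomial ℤ) (T 1)) *
      PowerSeries.C (R := LaurentPolynomial ℤ) (T (-1)) = 1 := by
    rw [← map_mul, ← T_add]
    norm_num
  rw [map_add]
  linear_combination X ^ 2 * h

open LaurentPolynomial PowerSeries in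
/-- Depth-1 (massless-type) case: `(1-qx)(1-qx⁻¹) ∑_σ q^σ χ_{s+σ} = χ_s - q χ_{s-1}`. -/
lemma pm_base_case (s : ℕ) (hs : 1 ≤ s) :
    (1 - PowerSeries.C (R := LaurentPolynomial ℤ) (T 1) * X) *
      (1 - PowerSeries.C (R := LaurentPolynomial ℤ) (T (-1)) * X) *
      PowerSeries.mk (fun m => chi (s + m)) =
    PowerSeries.C (R := LaurentPolynomial ℤ) (chi s) -
      PowerSeries.C (R := LaurentPolynomial ℤ) (chi (s - 1)) * X := by
  obtain ⟨t, rfl⟩ : ∃ t, s = t + 1 := ⟨s - 1, by omega⟩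
  rw [pm_prod_eq]
  set a : LaurentPolynomial ℤ := T 1 + T (-1) with ha
  refine PowerSeries.ext fun m => ?_
  rw [add_mul, sub_mul, one_mul, mul_assoc]
  match m with
  | 0 =>
    simp [PowerSeries.coeff_zero_eq_constantCoeff, map_mul]
  | 1 =>
    simp only [map_add, map_sub, PowerSeries.coeff_C_mul, PowerSeries.coeff_succ_X_mul,
      PowerSeries.coeff_mk, PowerSeries.coeff_C, PowerSeries.coeff_X_pow_mul',
      PowerSeries.coeff_X, if_neg (one_ne_zero), if_pos rfl,
      if_neg (by norm_num : ¬ (2:ℕ) ≤ 1), if_true]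
    have := chi_rec t
    rw [← ha] at this
    simp only [show t + 1 + 1 = t + 2 from rfl, show t + 1 + 0 = t + 1 from rfl,
      show t + 1 - 1 = t from rfl]
    linear_combination -this
  | (n+2) =>
    simp only [map_add, map_sub, PowerSeries.coeff_C_mul, PowerSeries.coeff_succ_X_mul,
      PowerSeries.coeff_mk, PowerSeries.coeff_C, PowerSeries.coeff_X_pow_mul',
      PowerSeries.coeff_X, if_pos (by omega : (2:ℕ) ≤ n + 2),
      if_neg (by omega : ¬ n + 2 = 0), if_neg (by omega : ¬ n + 2 = 1)]
    have := chi_rec (t + 1 + n)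
    rw [← ha] at this
    have e1 : t + 1 + (n + 2) = t + 1 + n + 2 := by ring
    have e2 : t + 1 + (n + 1) = t + 1 + n + 1 := by ring
    have e3 : t + 1 + (n + 2 - 2) = t + 1 + n := by omega
    rw [e1, e2, e3]
    linear_combination -this

/-- so(2)⊕so(3) decomposition of the depth-τ partially massless spin-s module of so(2,3):
`(1 - qx)(1 - qx⁻¹) · ∑_{k=0}^{τ-1} ∑_{σ≥0} q^{σ+k} χ_{s+σ-k}(x) = χ_s(x) - q^τ χ_{s-τ}(x)`.
The double series has coefficient of `q^m` equal to `∑_{k < τ, k ≤ m} χ_{s+(m-k)-k}(x)`. -/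
theorem partially_massless_decomposition (s τ : ℕ) (hτ : 1 ≤ τ) (hτs : τ ≤ s) :
    (1 - PowerSeries.C (R := LaurentPolynomial ℤ) (LaurentPolynomial.T 1) * PowerSeries.X) *
      (1 - PowerSeries.C (R := LaurentPolynomial ℤ) (LaurentPolynomial.T (-1)) * PowerSeries.X) *
      PowerSeries.mk (fun m =>
        ∑ k ∈ Finset.range τ, if k ≤ m then chi (s + (m - k) - k) else 0) =
    PowerSeries.C (R := LaurentPolynomial ℤ) (chi s) -
      PowerSeries.C (R := LaurentPolynomial ℤ) (chi (s - τ)) * PowerSeries.X ^ τ := by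
  open LaurentPolynomial PowerSeries in
  induction τ, hτ using Nat.le_induction with
  | base =>
    have hmk : PowerSeries.mk (fun m =>
        ∑ k ∈ Finset.range 1, if k ≤ m then chi (s + (m - k) - k) else 0) =
        PowerSeries.mk (fun m => chi (s + m)) := by
      refine PowerSeries.ext fun m => ?_
      simp [PowerSeries.coeff_mk]
    rw [hmk, pm_base_case s (by omega), pow_one]
  | succ τ hτ ih =>
    have hτs' : τ ≤ s := by omega
    have hmk : PowerSeries.mk (fun m =>
        ∑ k ∈ Finset.range (τ + 1), if k ≤ m then chi (s + (m - k) - k) else 0) =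
        PowerSeries.mk (fun m =>
          ∑ k ∈ Finset.range τ, if k ≤ m then chi (s + (m - k) - k) else 0) +
        X ^ τ * PowerSeries.mk (fun m => chi (s - τ + m)) := by
      refine PowerSeries.ext fun m => ?_
      simp only [map_add, PowerSeries.coeff_mk, PowerSeries.coeff_X_pow_mul',
        Finset.sum_range_succ]
      congr 1
      split
      · next h => congr 1; omega
      · rfl
    rw [hmk, mul_add]
    have hbase := pm_base_case (s - τ) (by omega)
    have hassoc : (1 - PowerSeries.C (R := LaurentPolynomial ℤ) (T 1) * X) *
        (1 - PowerSeries.C (R := LaurentPolynomial ℤ) (T (-1)) * X) *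
        (X ^ τ * PowerSeries.mk (fun m => chi (s - τ + m))) =
        X ^ τ * (PowerSeries.C (R := LaurentPolynomial ℤ) (chi (s - τ)) -
          PowerSeries.C (R := LaurentPolynomial ℤ) (chi (s - τ - 1)) * X) := by
      rw [← hbase]; ring
    rw [hassoc]
    have e1 : s - τ - 1 = s - (τ + 1) := by omega
    rw [e1] at *
    have := ih hτs'
    rw [pow_succ]
    linear_combination this
end

section
/- For every natural number s ≥ 1, in ℤ[y,y⁻¹,z,z⁻¹][[q]] one has ∏_{ε₁,ε₂∈{±1}}(1 − q y^{ε₁} z^{ε₂}) · (∑_{a=0}^{∞} q^a χ_{2s+a}(y) χ_a(z))² = ∑_{σ=0}^{2s} χ_{2σ}(y) + ∑_{b=1}^{∞} q^{b} (χ_{4s+b}(y) χ_b(z) − q χ_{4s+b−1}(y) χ_{b−1}(z)). (Character form of the Flato–Frønsdal theorem for two so(2,4) spin-s singletons of the same chirality: D(s+1;(s,s)₊)^{⊗2} ≅ ⊕_{σ=0}^{2s} D(2s+2;(σ,σ)₊) ⊕ ⊕_{σ≥2s+1} D(σ+2;(σ,2s)₊), i.e. a finite tower of massive fields plus an infinite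 tower of mixed-symmetry massless fields.) -/
open LaurentPolynomial in
/-- Geometric series `∑ q^a w^a`. -/
noncomputable def geom (w : L2) : PowerSeries L2 := PowerSeries.mk fun a => w ^ a

open LaurentPolynomial in
lemma geom_mul (w : L2) : (1 - PowerSeries.C w * PowerSeries.X) * geom w = 1 := by
  have h : (1 - PowerSeries.C w * PowerSeries.X) * geom w
      = geom w - PowerSeries.C w * (PowerSeries.X * geom w) := by ring
  rw [h]
  ext n
  rcases n with _ | n
  · simp [geom]
  · simp [geom, PowerSeries.coeff_succ_X_mul, pow_succ, mul_comm]

open LaurentPolynomial in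
noncomputable def del : L2 :=
  LaurentPolynomial.C (T 1 - T (-1)) * (T 1 - T (-1))

open LaurentPolynomial in
lemma tele {R : Type*} [CommRing R] (n : ℕ) :
    (T 1 - T (-1) : R[T;T⁻¹]) * (∑ k ∈ Finset.range (n+1), T ((n : ℤ) - 2*k)) =
      T ((n : ℤ) + 1) - T (-(n : ℤ) - 1) := by
  have h : (T 1 - T (-1) : R[T;T⁻¹]) * (∑ k ∈ Finset.range (n+1), T ((n : ℤ) - 2*k))
      = ∑ k ∈ Finset.range (n+1),
          ((fun k : ℕ => (T ((n : ℤ) + 1 - 2*k) : R[T;T⁻¹])) k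
            - (fun k : ℕ => (T ((n : ℤ) + 1 - 2*k) : R[T;T⁻¹])) (k+1)) := by
    rw [sub_mul, Finset.mul_sum, Finset.mul_sum, ← Finset.sum_sub_distrib]
    refine Finset.sum_congr rfl fun k _ => ?_
    rw [← T_add, ← T_add]
    congr 2 <;> push_cast <;> ring_nf
  rw [h, Finset.sum_range_sub']
  congr 2 <;> push_cast <;> ring_nf

open LaurentPolynomial in
lemma teleA {R : Type*} [CommRing R] (s : ℕ) :
    (T 1 - T (-1) : R[T;T⁻¹]) *
      (∑ σ ∈ Finset.range (2*s+1), (T ((2*σ : ℤ) + 1) - T (-(2*σ : ℤ) - 1))) =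
      T (4*(s:ℤ)+2) + T (-(4*(s:ℤ)+2)) - 2 := by
  have h : (T 1 - T (-1) : R[T;T⁻¹]) *
      (∑ σ ∈ Finset.range (2*s+1), (T ((2*σ : ℤ) + 1) - T (-(2*σ : ℤ) - 1)))
      = ∑ σ ∈ Finset.range (2*s+1),
          ((fun σ : ℕ => (T (2*(σ:ℤ)) + T (-(2*(σ:ℤ))) : R[T;T⁻¹])) (σ+1)
            - (fun σ : ℕ => (T (2*(σ:ℤ)) + T (-(2*(σ:ℤ))) : R[T;T⁻¹])) σ) := by
    rw [Finset.mul_sum]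
    refine Finset.sum_congr rfl fun σ _ => ?_
    simp only [sub_mul, mul_sub, ← T_add]
    have e1 : (1 : ℤ) + (2*(σ:ℤ)+1) = 2*((σ:ℤ)+1) := by ring
    have e2 : (1 : ℤ) + (-(2*(σ:ℤ))-1) = -(2*(σ:ℤ)) := by ring
    have e3 : (-1 : ℤ) + (2*(σ:ℤ)+1) = 2*(σ:ℤ) := by ring
    have e4 : (-1 : ℤ) + (-(2*(σ:ℤ))-1) = -(2*((σ:ℤ)+1)) := by ring
    rw [e1, e2, e3, e4]
    push_cast
    ring
  rw [h, Finset.sum_range_sub (fun σ : ℕ => (T (2*(σ:ℤ)) + T (-(2*(σ:ℤ))) : R[T;T⁻¹]))]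
  have e0 : ((2*s+1 : ℕ) : ℤ) = 2*(s:ℤ)+1 := by push_cast; ring
  rw [e0]
  have e5 : (2*(2*(s:ℤ)+1)) = 4*(s:ℤ)+2 := by ring
  rw [e5]
  simp only [Nat.cast_zero, mul_zero, neg_zero, T_zero]
  ring

open LaurentPolynomial in
lemma decomp (t : ℕ) :
    PowerSeries.C del * PowerSeries.mk (fun a => chiY (t+a) * chiZv a)
      = PowerSeries.C (yz ((t:ℤ)+1) 1) * geom (yz 1 1)
        - PowerSeries.C (yz ((t:ℤ)+1) (-1)) * geom (yz 1 (-1))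
        - PowerSeries.C (yz (-(t:ℤ)-1) 1) * geom (yz (-1) 1)
        + PowerSeries.C (yz (-(t:ℤ)-1) (-1)) * geom (yz (-1) (-1)) := by
  refine PowerSeries.ext fun n => ?_
  simp only [map_add, map_sub, PowerSeries.coeff_C_mul, PowerSeries.coeff_mk, geom]
  have hL : del * (chiY (t+n) * chiZv n)
      = (LaurentPolynomial.C ((T 1 - T (-1)) *
          (∑ k ∈ Finset.range ((t+n) + 1), T ((((t+n) : ℕ) : ℤ) - 2*k))) : L2)
          * ((T 1 - T (-1)) * (∑ k ∈ Finset.range (n + 1), T ((n : ℤ) - 2*k))) := by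
    rw [del, chiY, chiZv, map_mul]; ring
  rw [hL, tele, tele]
  have A1 : (T ((((t+n):ℕ):ℤ)+1) : LaurentPolynomial ℤ) = T ((t:ℤ)+1) * T (n:ℤ) := by
    rw [← T_add]; congr 1; push_cast; ring
  have A2 : (T (-(((t+n):ℕ):ℤ)-1) : LaurentPolynomial ℤ) = T (-(t:ℤ)-1) * T (-(n:ℤ)) := by
    rw [← T_add]; congr 1; push_cast; ring
  have A3 : (T ((n:ℤ)+1) : L2) = T 1 * T (n:ℤ) := by
    rw [← T_add]; congr 1; ring
  have A4 : (T (-(n:ℤ)-1) : L2) = T (-1) * T (-(n:ℤ)) := by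
    rw [← T_add]; congr 1; ring
  have hp : ∀ (e₁ e₂ : ℤ), (yz e₁ e₂)^n
      = LaurentPolynomial.C (T ((n:ℤ)*e₁)) * T ((n:ℤ)*e₂) := by
    intro e₁ e₂
    rw [yz, mul_pow, ← map_pow, T_pow, T_pow]
  have hp1 : (yz 1 1)^n = LaurentPolynomial.C (T (n:ℤ)) * T (n:ℤ) := by
    rw [hp]; norm_num
  have hp2 : (yz 1 (-1))^n = LaurentPolynomial.C (T (n:ℤ)) * T (-(n:ℤ)) := by
    rw [hp]; norm_num
  have hp3 : (yz (-1) 1)^n = LaurentPolynomial.C (T (-(n:ℤ))) * T (n:ℤ) := by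
    rw [hp]; norm_num
  have hp4 : (yz (-1) (-1))^n = LaurentPolynomial.C (T (-(n:ℤ))) * T (-(n:ℤ)) := by
    rw [hp]; norm_num
  rw [A1, A2, A3, A4, hp1, hp2, hp3, hp4]
  simp only [yz, map_sub, map_mul]
  ring

open LaurentPolynomial in
lemma shiftS (s : ℕ) :
    PowerSeries.mk (fun m =>
        (if 1 ≤ m then chiY (4*s+m) * chiZv m else 0) -
          (if 2 ≤ m then chiY (4*s+m-2) * chiZv (m-2) else 0))
      = PowerSeries.mk (fun m => chiY (4*s+m) * chiZv m)
        - PowerSeries.C (chiY (4*s) * chiZv 0)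
        - PowerSeries.X^2 * PowerSeries.mk (fun m => chiY (4*s+m) * chiZv m) := by
  refine PowerSeries.ext fun m => ?_
  rcases m with _ | m
  · simp
  rcases m with _ | m
  · simp [PowerSeries.coeff_X_pow_mul']
  · have h2 : PowerSeries.coeff (m+2)
        (PowerSeries.X^2 * PowerSeries.mk (fun m => chiY (4*s+m) * chiZv m))
        = chiY (4*s+m) * chiZv m := by
      have := PowerSeries.coeff_X_pow_mul
        (PowerSeries.mk (fun m => chiY (4*s+m) * chiZv m)) 2 m
      simpa [add_comm] using this
    simp only [map_sub, PowerSeries.coeff_mk, h2]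
    have e0 : (PowerSeries.coeff (m+2)) (PowerSeries.C (chiY (4*s) * chiZv 0)) = 0 := by
      simp
    rw [e0]
    have e1 : 4*s+(m+2)-2 = 4*s+m := by omega
    have e2 : m+2-2 = m := by omega
    simp only [e1, e2]
    norm_num

open LaurentPolynomial in
lemma T_sub_ne_zero1 : (T 1 - T (-1) : LaurentPolynomial ℤ) ≠ 0 := by
  intro h
  have h1 : (T 1 : LaurentPolynomial ℤ) = T (-1) := sub_eq_zero.mp h
  have := congrArg (fun p : LaurentPolynomial ℤ => p.coeff 1) h1
  simp at this

open LaurentPolynomial in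
lemma T_sub_ne_zero2 : (T 1 - T (-1) : L2) ≠ 0 := by
  intro h
  have h1 : (T 1 : L2) = T (-1) := sub_eq_zero.mp h
  have := congrArg (fun p : L2 => p.coeff 1) h1
  simp at this

open LaurentPolynomial in
lemma C_dy_ne_zero : (LaurentPolynomial.C (T 1 - T (-1)) : L2) ≠ 0 := by
  intro h
  have h2 := congrArg (fun p : L2 => p.coeff 0) h
  simp only [LaurentPolynomial.C_apply, if_pos rfl] at h2
  exact T_sub_ne_zero1 (by simpa using h2)

lemma cancel_aux (x u v : PowerSeries L2) (hne : x ≠ 0) (h : x*u = x*v) : u = v := by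
  have h2 : x * (u - v) = 0 := by rw [mul_sub, h, sub_self]
  rcases mul_eq_zero.mp h2 with h3 | h3
  · exact absurd h3 hne
  · exact sub_eq_zero.mp h3

open LaurentPolynomial in
lemma key {R : Type*} [CommRing R] (a ai y yi z zi x : R)
    (ha : a*ai = 1) (hy : y*yi = 1) (hz : z*zi = 1) :
    (a*z*((1 - y*zi*x)*(1 - yi*z*x)*(1 - yi*zi*x)) - a*zi*((1 - y*z*x)*(1 - yi*z*x)*(1 - yi*zi*x)) - ai*z*((1 - y*z*x)*(1 - y*zi*x)*(1 - yi*zi*x)) + ai*zi*((1 - y*z*x)*(1 - y*zi*x)*(1 - yi*z*x)))^2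
      = ((1 - y*z*x)*(1 - y*zi*x)*(1 - yi*z*x)*(1 - yi*zi*x))*((a^2+ai^2-2)*((z-zi)*(z-zi)))
        + ((y-yi)*(z-zi)) *
            ((a^2*yi*z*((1 - y*zi*x)*(1 - yi*z*x)*(1 - yi*zi*x)) - a^2*yi*zi*((1 - y*z*x)*(1 - yi*z*x)*(1 - yi*zi*x)) - ai^2*y*z*((1 - y*z*x)*(1 - y*zi*x)*(1 - yi*zi*x)) + ai^2*y*zi*((1 - y*z*x)*(1 - y*zi*x)*(1 - yi*z*x))) - ((1 - y*z*x)*(1 - y*zi*x)*(1 - yi*z*x)*(1 - yi*zi*x))*((a^2*yi - ai^2*y)*(z-zi)) - x^2*(a^2*yi*z*((1 - y*zi*x)*(1 - yi*z*x)*(1 - yi*zi*x)) - a^2*yi*zi*((1 - y*z*x)*(1 - yi*z*x)*(1 - yi*zi*x)) - ai^2*y*z*((1 - y*z*x)*(1 - y*zi*x)*(1 - yi*zi*x)) + ai^2*y*zi*((1 - y*z*x)*(1 - y*zi*x)*(1 - yi*z*x)))) := by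
  linear_combination (-2*zi^2 + 4*z*zi - 2*z^2 + 2*yi*zi^3*x - 2*yi*z*zi^2*x - 2*yi*z^2*zi*x + 2*yi*z^3*x - 2*yi^2*z*zi^3*x^2 + 4*yi^2*z^2*zi^2*x^2 - 2*yi^2*z^3*zi*x^2 + 2*y*zi^3*x - 2*y*z*zi^2*x - 2*y*z^2*zi*x + 2*y*z^3*x - 2*y*yi*zi^4*x^2 + 4*y*yi*z^2*zi^2*x^2 - 2*y*yi*z^4*x^2 + 2*y*yi^2*z*zi^4*x^3 - 2*y*yi^2*z^2*zi^3*x^3 - 2*y*yi^2*z^3*zi^2*x^3 + 2*y*yi^2*z^4*zi*x^3 - 2*y^2*z*zi^3*x^2 + 4*y^2*z^2*zi^2*x^2 - 2*y^2*z^3*zi*x^2 + 2*y^2*yi*z*zi^4*x^3 - 2*y^2*yi*z^2*zi^3*x^3 - 2*y^2*yi*z^3*zi^2*x^3 + 2*y^2*yi*z^4*zi*x^3 - 2*y^2*yi^2*z^2*zi^4*x^4 + 4*y^2*yi^2*z^3*zi^3*x^4 - 2*y^2*yi^2*z^4*zi^2*x^4) * ha + (ai^2*zi^2*x^2 - 2*ai^2*z*zi*x^2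 - ai^2*z*zi^3*x^2 + ai^2*z^2*x^2 + 2*ai^2*z^2*zi^2*x^2 - ai^2*z^3*zi*x^2 - ai^2*yi*zi^3*x + ai^2*yi*z*zi^2*x + ai^2*yi*z^2*zi*x - ai^2*yi*z^3*x + ai^2*yi^2*z*zi^3*x^2 - 2*ai^2*yi^2*z^2*zi^2*x^2 + ai^2*yi^2*z^3*zi*x^2 + ai^2*y*zi^3*x - ai^2*y*zi^3*x^3 - ai^2*y*z*zi^2*x + ai^2*y*z*zi^2*x^3 + ai^2*y*z*zi^4*x^3 - ai^2*y*z^2*zi*x + ai^2*y*z^2*zi*x^3 - ai^2*y*z^2*zi^3*x^3 + ai^2*y*z^3*x - ai^2*y*z^3*x^3 - ai^2*y*z^3*zi^2*x^3 + ai^2*y*z^4*zi*x^3 + ai^2*y*yi*zi^4*x^2 - ai^2*y*yi*z*zi^3*x^2 - ai^2*y*yi*z^3*zi*x^2 + ai^2*y*yi*z^4*x^2 - ai^2*y*yi^2*z*zi^4*x^3 + ai^2*y*yi^2*z^2*zi^3*x^3 + ai^2*y*yi^2*z^3*zi^2*x^3 - ai^2*y*yi^2*z^4*zi*x^3 - ai^2*y^2*zi^4*x^2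 + ai^2*y^2*z*zi^3*x^4 + 2*ai^2*y^2*z^2*zi^2*x^2 - 2*ai^2*y^2*z^2*zi^2*x^4 - ai^2*y^2*z^2*zi^4*x^4 + ai^2*y^2*z^3*zi*x^4 + 2*ai^2*y^2*z^3*zi^3*x^4 - ai^2*y^2*z^4*x^2 - ai^2*y^2*z^4*zi^2*x^4 + ai^2*y^2*yi^2*z^2*zi^4*x^4 - 2*ai^2*y^2*yi^2*z^3*zi^3*x^4 + ai^2*y^2*yi^2*z^4*zi^2*x^4 + ai^2*y^3*z*zi^4*x^3 - ai^2*y^3*z^2*zi^3*x^3 - ai^2*y^3*z^3*zi^2*x^3 + ai^2*y^3*z^4*zi*x^3 - ai^2*y^3*yi*z^2*zi^4*x^4 + 2*ai^2*y^3*yi*z^3*zi^3*x^4 - ai^2*y^3*yi*z^4*zi^2*x^4 + a^2*zi^2*x^2 - 2*a^2*z*zi*x^2 - a^2*z*zi^3*x^2 + a^2*z^2*x^2 + 2*a^2*z^2*zi^2*x^2 - a^2*z^3*zi*x^2 + a^2*yi*zi^3*x - a^2*yi*zi^3*x^3 - a^2*yi*z*zi^2*x + a^2*yi*z*zi^2*x^3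 + a^2*yi*z*zi^4*x^3 - a^2*yi*z^2*zi*x + a^2*yi*z^2*zi*x^3 - a^2*yi*z^2*zi^3*x^3 + a^2*yi*z^3*x - a^2*yi*z^3*x^3 - a^2*yi*z^3*zi^2*x^3 + a^2*yi*z^4*zi*x^3 - a^2*yi^2*zi^4*x^2 + a^2*yi^2*z*zi^3*x^4 + 2*a^2*yi^2*z^2*zi^2*x^2 - 2*a^2*yi^2*z^2*zi^2*x^4 - a^2*yi^2*z^2*zi^4*x^4 + a^2*yi^2*z^3*zi*x^4 + 2*a^2*yi^2*z^3*zi^3*x^4 - a^2*yi^2*z^4*x^2 - a^2*yi^2*z^4*zi^2*x^4 + a^2*yi^3*z*zi^4*x^3 - a^2*yi^3*z^2*zi^3*x^3 - a^2*yi^3*z^3*zi^2*x^3 + a^2*yi^3*z^4*zi*x^3 - a^2*y*zi^3*x + a^2*y*z*zi^2*x + a^2*y*z^2*zi*x - a^2*y*z^3*x + a^2*y*yi*zi^4*x^2 - a^2*y*yi*z*zi^3*x^2 - a^2*y*yi*z^3*zi*x^2 + a^2*y*yi*z^4*x^2 - a^2*y*yi^3*z^2*zi^4*x^4 + 2*a^2*y*yi^3*z^3*zi^3*x^4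 - a^2*y*yi^3*z^4*zi^2*x^4 + a^2*y^2*z*zi^3*x^2 - 2*a^2*y^2*z^2*zi^2*x^2 + a^2*y^2*z^3*zi*x^2 - a^2*y^2*yi*z*zi^4*x^3 + a^2*y^2*yi*z^2*zi^3*x^3 + a^2*y^2*yi*z^3*zi^2*x^3 - a^2*y^2*yi*z^4*zi*x^3 + a^2*y^2*yi^2*z^2*zi^4*x^4 - 2*a^2*y^2*yi^2*z^3*zi^3*x^4 + a^2*y^2*yi^2*z^4*zi^2*x^4) * hy + (-ai^2*zi^2*x^2 + 2*ai^2*z*zi*x^2 - ai^2*z^2*x^2 + ai^2*y*zi^3*x^3 - ai^2*y*z*zi^2*x^3 - ai^2*y*z^2*zi*x^3 + ai^2*y*z^3*x^3 + ai^2*y^2*zi^2*x^2 - 2*ai^2*y^2*z*zi*x^2 - ai^2*y^2*z*zi^3*x^4 + ai^2*y^2*z^2*x^2 + 2*ai^2*y^2*z^2*zi^2*x^4 - ai^2*y^2*z^3*zi*x^4 - ai^2*y^3*zi^3*x^3 + ai^2*y^3*z*zi^2*x^3 + ai^2*y^3*z^2*zi*x^3 - ai^2*y^3*z^3*x^3 +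 ai^2*y^4*z*zi^3*x^4 - 2*ai^2*y^4*z^2*zi^2*x^4 + ai^2*y^4*z^3*zi*x^4 - a^2*zi^2*x^2 + 2*a^2*z*zi*x^2 - a^2*z^2*x^2 + a^2*yi*zi^3*x^3 - a^2*yi*z*zi^2*x^3 - a^2*yi*z^2*zi*x^3 + a^2*yi*z^3*x^3 + a^2*yi^2*zi^2*x^2 - 2*a^2*yi^2*z*zi*x^2 - a^2*yi^2*z*zi^3*x^4 + a^2*yi^2*z^2*x^2 + 2*a^2*yi^2*z^2*zi^2*x^4 - a^2*yi^2*z^3*zi*x^4 - a^2*yi^3*zi^3*x^3 + a^2*yi^3*z*zi^2*x^3 + a^2*yi^3*z^2*zi*x^3 - a^2*yi^3*z^3*x^3 + a^2*yi^4*z*zi^3*x^4 - 2*a^2*yi^4*z^2*zi^2*x^4 + a^2*yi^4*z^3*zi*x^4) * hz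

open LaurentPolynomial in
set_option maxHeartbeats 1000000 in
/-- Flato–Frønsdal theorem for two so(2,4) spin-s singletons of the same chirality, in
character form:
`P₄⁻¹ · (∑_{a≥0} q^a χ_{2s+a}(y)χ_a(z))²
  = ∑_{σ=0}^{2s} χ_{2σ}(y) + ∑_{b≥1} q^b (χ_{4s+b}(y)χ_b(z) - q χ_{4s+b-1}(y)χ_{b-1}(z))`.
The second series on the right has coefficient of `q^m` equal to
`χ_{4s+m}(y)χ_m(z)` for `m = 1`, and `χ_{4s+m}(y)χ_m(z) - χ_{4s+m-2}(y)χ_{m-2}(z)` for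
`m ≥ 2` (and `0` for `m = 0`). -/
theorem flato_fronsdal_same_chirality (s : ℕ) (hs : 1 ≤ s) :
    P4inv * PowerSeries.mk (fun a => chiY (2 * s + a) * chiZv a) ^ 2 =
    PowerSeries.C (∑ σ ∈ Finset.range (2 * s + 1), chiY (2 * σ)) +
      PowerSeries.mk (fun m =>
        (if 1 ≤ m then chiY (4 * s + m) * chiZv m else 0) -
          (if 2 ≤ m then chiY (4 * s + m - 2) * chiZv (m - 2) else 0)) := by
  set a : PowerSeries L2 := PowerSeries.C (LaurentPolynomial.C (T (2*(s:ℤ)+1))) with ha_def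
  set ai : PowerSeries L2 := PowerSeries.C (LaurentPolynomial.C (T (-(2*(s:ℤ)+1)))) with hai_def
  set y : PowerSeries L2 := PowerSeries.C (LaurentPolynomial.C (T 1)) with hy_def
  set yi : PowerSeries L2 := PowerSeries.C (LaurentPolynomial.C (T (-1))) with hyi_def
  set z : PowerSeries L2 := PowerSeries.C ((T 1 : L2)) with hz_def
  set zi : PowerSeries L2 := PowerSeries.C ((T (-1) : L2)) with hzi_def
  have hmonY : ∀ u v : ℤ, (PowerSeries.C (R := L2) (LaurentPolynomial.C (T u))) *
      (PowerSeries.C (R := L2) (LaurentPolynomial.C (T v)))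
      = PowerSeries.C (R := L2) (LaurentPolynomial.C (T (u+v))) := by
    intro u v; rw [← map_mul, ← map_mul, ← T_add]
  have hmonZ : ∀ u v : ℤ, (PowerSeries.C ((T u : L2))) * (PowerSeries.C ((T v : L2)))
      = PowerSeries.C ((T (u+v) : L2)) := by
    intro u v; rw [← map_mul, ← T_add]
  have ha : a * ai = 1 := by
    rw [ha_def, hai_def, hmonY, show (2*(s:ℤ)+1) + (-(2*(s:ℤ)+1)) = 0 by ring]
    simp
  have hy : y * yi = 1 := by
    rw [hy_def, hyi_def, hmonY, show (1:ℤ) + (-1) = 0 by ring]; simp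
  have hz : z * zi = 1 := by
    rw [hz_def, hzi_def, hmonZ, show (1:ℤ) + (-1) = 0 by ring]; simp
  have hδ : PowerSeries.C del = (y - yi) * (z - zi) := by
    rw [del, hy_def, hyi_def, hz_def, hzi_def]
    simp only [map_mul, map_sub]
  have cm1 : PowerSeries.C (yz (((2*s:ℕ):ℤ)+1) 1) = a * z := by
    rw [yz, map_mul, ha_def, hz_def, show ((2*s:ℕ):ℤ)+1 = 2*(s:ℤ)+1 by push_cast; ring]
  have cm2 : PowerSeries.C (yz (((2*s:ℕ):ℤ)+1) (-1)) = a * zi := by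
    rw [yz, map_mul, ha_def, hzi_def, show ((2*s:ℕ):ℤ)+1 = 2*(s:ℤ)+1 by push_cast; ring]
  have cm3 : PowerSeries.C (yz (-((2*s:ℕ):ℤ)-1) 1) = ai * z := by
    rw [yz, map_mul, hai_def, hz_def, show -((2*s:ℕ):ℤ)-1 = -(2*(s:ℤ)+1) by push_cast; ring]
  have cm4 : PowerSeries.C (yz (-((2*s:ℕ):ℤ)-1) (-1)) = ai * zi := by
    rw [yz, map_mul, hai_def, hzi_def, show -((2*s:ℕ):ℤ)-1 = -(2*(s:ℤ)+1) by push_cast; ring]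
  have cn0 : a * a * yi = PowerSeries.C (LaurentPolynomial.C (T (((4*s:ℕ):ℤ)+1))) := by
    rw [ha_def, hyi_def, hmonY, hmonY,
      show (2*(s:ℤ)+1) + (2*(s:ℤ)+1) + (-1) = ((4*s:ℕ):ℤ)+1 by push_cast; ring]
  have cn0' : ai * ai * y = PowerSeries.C (LaurentPolynomial.C (T (-((4*s:ℕ):ℤ)-1))) := by
    rw [hai_def, hy_def, hmonY, hmonY,
      show (-(2*(s:ℤ)+1)) + (-(2*(s:ℤ)+1)) + 1 = -((4*s:ℕ):ℤ)-1 by push_cast; ring]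
  have cn1 : PowerSeries.C (yz (((4*s:ℕ):ℤ)+1) 1) = a * a * yi * z := by
    rw [yz, map_mul, ← cn0, hz_def]
  have cn2 : PowerSeries.C (yz (((4*s:ℕ):ℤ)+1) (-1)) = a * a * yi * zi := by
    rw [yz, map_mul, ← cn0, hzi_def]
  have cn3 : PowerSeries.C (yz (-((4*s:ℕ):ℤ)-1) 1) = ai * ai * y * z := by
    rw [yz, map_mul, ← cn0', hz_def]
  have cn4 : PowerSeries.C (yz (-((4*s:ℕ):ℤ)-1) (-1)) = ai * ai * y * zi := by
    rw [yz, map_mul, ← cn0', hzi_def]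
  have cw1 : PowerSeries.C (yz 1 1) = y * z := by rw [yz, map_mul, hy_def, hz_def]
  have cw2 : PowerSeries.C (yz 1 (-1)) = y * zi := by rw [yz, map_mul, hy_def, hzi_def]
  have cw3 : PowerSeries.C (yz (-1) 1) = yi * z := by rw [yz, map_mul, hyi_def, hz_def]
  have cw4 : PowerSeries.C (yz (-1) (-1)) = yi * zi := by rw [yz, map_mul, hyi_def, hzi_def]
  have hG1 : P4inv * geom (yz 1 1) = ((1 - y*zi*PowerSeries.X) * ((1 - yi*z*PowerSeries.X) * (1 - yi*zi*PowerSeries.X))) := by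
    have e : P4inv = ((1 - PowerSeries.C (yz 1 (-1)) * PowerSeries.X) *
        ((1 - PowerSeries.C (yz (-1) 1) * PowerSeries.X) *
         (1 - PowerSeries.C (yz (-1) (-1)) * PowerSeries.X))) *
        (1 - PowerSeries.C (yz 1 1) * PowerSeries.X) := by rw [P4inv]; ring
    rw [e, mul_assoc, geom_mul, mul_one, cw2, cw3, cw4]
  have hG2 : P4inv * geom (yz 1 (-1)) = ((1 - y*z*PowerSeries.X) * ((1 - yi*z*PowerSeries.X) * (1 - yi*zi*PowerSeries.X))) := by
    have e : P4inv = ((1 - PowerSeries.C (yz 1 1) * PowerSeries.X) *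
        ((1 - PowerSeries.C (yz (-1) 1) * PowerSeries.X) *
         (1 - PowerSeries.C (yz (-1) (-1)) * PowerSeries.X))) *
        (1 - PowerSeries.C (yz 1 (-1)) * PowerSeries.X) := by rw [P4inv]; ring
    rw [e, mul_assoc, geom_mul, mul_one, cw1, cw3, cw4]
  have hG3 : P4inv * geom (yz (-1) 1) = ((1 - y*z*PowerSeries.X) * ((1 - y*zi*PowerSeries.X) * (1 - yi*zi*PowerSeries.X))) := by
    have e : P4inv = ((1 - PowerSeries.C (yz 1 1) * PowerSeries.X) *
        ((1 - PowerSeries.C (yz 1 (-1)) * PowerSeries.X) *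
         (1 - PowerSeries.C (yz (-1) (-1)) * PowerSeries.X))) *
        (1 - PowerSeries.C (yz (-1) 1) * PowerSeries.X) := by rw [P4inv]; ring
    rw [e, mul_assoc, geom_mul, mul_one, cw1, cw2, cw4]
  have hG4 : P4inv * geom (yz (-1) (-1)) = ((1 - y*z*PowerSeries.X) * ((1 - y*zi*PowerSeries.X) * (1 - yi*z*PowerSeries.X))) := by
    have e : P4inv = ((1 - PowerSeries.C (yz 1 1) * PowerSeries.X) *
        ((1 - PowerSeries.C (yz 1 (-1)) * PowerSeries.X) *
         (1 - PowerSeries.C (yz (-1) 1) * PowerSeries.X))) *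
        (1 - PowerSeries.C (yz (-1) (-1)) * PowerSeries.X) := by rw [P4inv]; ring
    rw [e, mul_assoc, geom_mul, mul_one, cw1, cw2, cw3]
  have hF := decomp (2*s)
  rw [hδ, cm1, cm2, cm3, cm4] at hF
  have hN := decomp (4*s)
  rw [hδ, cn1, cn2, cn3, cn4] at hN
  have hW : P4inv * (((y - yi) * (z - zi)) * PowerSeries.mk (fun a => chiY (2*s+a) * chiZv a)) = a*z*((1 - y*zi*PowerSeries.X) * ((1 - yi*z*PowerSeries.X) * (1 - yi*zi*PowerSeries.X))) - a*zi*((1 - y*z*PowerSeries.X) * ((1 - yi*z*PowerSeries.X) * (1 - yi*zi*PowerSeries.X))) - ai*z*((1 - y*z*PowerSeries.X) * ((1 - y*zi*PowerSeries.X) * (1 - yi*zi*PowerSeries.X))) + ai*zi*((1 - y*z*PowerSeries.X) * ((1 - y*zi*PowerSeries.X) * (1 - yi*z*PowerSeries.X))) := by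
    rw [hF]
    linear_combination (a*z) * hG1 - (a*zi) * hG2 - (ai*z) * hG3 + (ai*zi) * hG4
  have hNW : P4inv * (((y - yi) * (z - zi)) * PowerSeries.mk (fun m => chiY (4*s+m) * chiZv m)) = a*a*yi*z*((1 - y*zi*PowerSeries.X) * ((1 - yi*z*PowerSeries.X) * (1 - yi*zi*PowerSeries.X))) - a*a*yi*zi*((1 - y*z*PowerSeries.X) * ((1 - yi*z*PowerSeries.X) * (1 - yi*zi*PowerSeries.X))) - ai*ai*y*z*((1 - y*z*PowerSeries.X) * ((1 - y*zi*PowerSeries.X) * (1 - yi*zi*PowerSeries.X))) + ai*ai*y*zi*((1 - y*z*PowerSeries.X) * ((1 - y*zi*PowerSeries.X) * (1 - yi*z*PowerSeries.X))) := by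
    rw [hN]
    linear_combination (a*a*yi*z) * hG1 - (a*a*yi*zi) * hG2 - (ai*ai*y*z) * hG3 + (ai*ai*y*zi) * hG4
  have ca2 : a*a = PowerSeries.C (LaurentPolynomial.C (T (4*(s:ℤ)+2))) := by
    rw [ha_def, hmonY, show (2*(s:ℤ)+1)+(2*(s:ℤ)+1) = 4*(s:ℤ)+2 by ring]
  have cai2 : ai*ai = PowerSeries.C (LaurentPolynomial.C (T (-(4*(s:ℤ)+2)))) := by
    rw [hai_def, hmonY, show (-(2*(s:ℤ)+1))+(-(2*(s:ℤ)+1)) = -(4*(s:ℤ)+2) by ring]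
  have hA2 : ((y - yi) * (z - zi)) * (((y - yi) * (z - zi)) *
      PowerSeries.C (∑ σ ∈ Finset.range (2 * s + 1), chiY (2 * σ)))
      = (a*a + ai*ai - 2) * ((z - zi) * (z - zi)) := by
    rw [← hδ, ← map_mul, ← map_mul]
    have hsum : (∑ σ ∈ Finset.range (2 * s + 1), chiY (2 * σ))
        = LaurentPolynomial.C (∑ σ ∈ Finset.range (2*s+1),
            ∑ k ∈ Finset.range (2*σ+1), T (((2*σ:ℕ):ℤ) - 2*k)) := by
      rw [map_sum]; rfl
    have hAy : (T 1 - T (-1) : LaurentPolynomial ℤ) * ((T 1 - T (-1)) *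
        (∑ σ ∈ Finset.range (2*s+1), ∑ k ∈ Finset.range (2*σ+1), T (((2*σ:ℕ):ℤ) - 2*k)))
        = T (4*(s:ℤ)+2) + T (-(4*(s:ℤ)+2)) - 2 := by
      have h1 : (T 1 - T (-1) : LaurentPolynomial ℤ) *
          (∑ σ ∈ Finset.range (2*s+1), ∑ k ∈ Finset.range (2*σ+1), T (((2*σ:ℕ):ℤ) - 2*k))
          = ∑ σ ∈ Finset.range (2*s+1), (T ((2*σ : ℤ) + 1) - T (-(2*σ : ℤ) - 1)) := by
        rw [Finset.mul_sum]
        refine Finset.sum_congr rfl fun σ _ => ?_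
        rw [tele (2*σ)]
        congr 2 <;> push_cast <;> ring_nf
      rw [h1, teleA]
    have hL2 : del * (del * (∑ σ ∈ Finset.range (2 * s + 1), chiY (2 * σ)))
        = LaurentPolynomial.C (T (4*(s:ℤ)+2) + T (-(4*(s:ℤ)+2)) - 2)
            * ((T 1 - T (-1)) * (T 1 - T (-1)) : L2) := by
      rw [hsum, ← hAy, del, map_mul, map_mul]
      ring
    rw [hL2]
    simp only [map_mul, map_sub, map_add, map_ofNat]
    rw [← ca2, ← cai2, ← hz_def, ← hzi_def]
  have hD0 : ((y - yi) * (z - zi)) * PowerSeries.C (chiY (4*s) * chiZv 0)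
      = (a*a*yi - ai*ai*y) * (z - zi) := by
    rw [← hδ, ← map_mul]
    have h0 : chiZv 0 = 1 := by simp [chiZv]
    have h1 : del * (chiY (4*s) * chiZv 0)
        = LaurentPolynomial.C ((T 1 - T (-1)) *
            (∑ k ∈ Finset.range (4*s+1), T (((4*s:ℕ):ℤ) - 2*k))) * ((T 1 - T (-1)) : L2) := by
      rw [h0, del, chiY, map_mul]; ring
    rw [h1, tele]
    simp only [map_sub, map_mul]
    rw [← hz_def, ← hzi_def, cn0, cn0']
  have hkey := key a ai y yi z zi (PowerSeries.X) ha hy hz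
  have hMne : ((y - yi) * (z - zi) : PowerSeries L2) ≠ 0 := by
    rw [← hδ]
    intro h
    have h2 : del = 0 := by
      have := congrArg (PowerSeries.constantCoeff) h
      simpa using this
    have h5 : del ≠ 0 := by
      rw [del]
      exact mul_ne_zero C_dy_ne_zero T_sub_ne_zero2
    exact h5 h2
  have hPne : (P4inv : PowerSeries L2) ≠ 0 := by
    have h1 : PowerSeries.constantCoeff P4inv = 1 := by
      simp [P4inv]
    intro h
    rw [h, map_zero] at h1
    exact zero_ne_one h1
  have hne : (((y - yi) * (z - zi)) * (((y - yi) * (z - zi)) * P4inv) : PowerSeries L2) ≠ 0 :=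
    mul_ne_zero hMne (mul_ne_zero hMne hPne)
  have hP : P4inv = (1 - y*z*PowerSeries.X) * ((1 - y*zi*PowerSeries.X) *
      ((1 - yi*z*PowerSeries.X) * (1 - yi*zi*PowerSeries.X))) := by
    rw [P4inv, cw1, cw2, cw3, cw4]; ring
  refine cancel_aux _ _ _ hne ?_
  rw [shiftS s]
  linear_combination (P4inv * (((y - yi) * (z - zi)) * PowerSeries.mk (fun a => chiY (2*s+a) * chiZv a)) + (a*z*((1 - y*zi*PowerSeries.X) * ((1 - yi*z*PowerSeries.X) * (1 - yi*zi*PowerSeries.X))) - a*zi*((1 - y*z*PowerSeries.X) * ((1 - yi*z*PowerSeries.X) * (1 - yi*zi*PowerSeries.X))) - ai*z*((1 - y*z*PowerSeries.X) * ((1 - y*zi*PowerSeries.X) * (1 - yi*zi*PowerSeries.X))) + ai*zi*((1 - y*z*PowerSeries.X) * ((1 - y*zi*PowerSeries.X) * (1 - yi*z*PowerSeries.X))))) * hW + hkey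
    - P4inv * hA2 - ((y - yi) * (z - zi)) * hNW + PowerSeries.X^2 * ((y - yi) * (z - zi)) * hNW + P4inv * ((y - yi) * (z - zi)) * hD0
    + (2*zi^2 - 4*z*zi + 2*z^2 - ai^2*zi^2 + 2*ai^2*z*zi - ai^2*z^2 + ai^2*y*yi*zi^2 - 2*ai^2*y*yi*z*zi + ai^2*y*yi*z^2 - ai^2*y^2*zi^2 + 2*ai^2*y^2*z*zi - ai^2*y^2*z^2 - a^2*zi^2 + 2*a^2*z*zi - a^2*z^2 - a^2*yi^2*zi^2 + 2*a^2*yi^2*z*zi - a^2*yi^2*z^2 + a^2*y*yi*zi^2 - 2*a^2*y*yi*z*zi + a^2*y*yi*z^2) * hP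
end
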